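/- (Regime R2 of Theorem 1, reduced problem.) Suppose 0 ≤ θ̄ < μ° ≤ M. Then sup{ q ∈ [0,1] : there exists μ₂ ∈ [μ°, M] with q·θ̄ + (1−q)·μ₂ = μ° and ∫₀^q F⁻¹(s) ds ≤ q·θ̄ } = min{ f̄(θ̄), (M − μ°)/(M − θ̄) }, and this supremum is attained. -/

import Mathlib

open Set

/-- Regime R2 of Theorem 1, reduced problem: if `0 ≤ θ̄ < μ° ≤ M`, then
the supremum of `q ∈ [0,1]` such that there is `μ₂ ∈ [μ°, M]` with
`q·θ̄ + (1−q)·μ₂ = μ°` and `∫₀^q F⁻¹ ≤ q·θ̄` equals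
`min (f̄(θ̄)) ((M − μ°)/(M − θ̄))`, and it is attained. -/
theorem regime_R2_reduced
    (M : ℝ) (hM : 0 < M) (Finv : ℝ → ℝ)
    (hFinv_mono : MonotoneOn Finv (Icc 0 1))
    (hFinv_range : ∀ s ∈ Icc (0:ℝ) 1, Finv s ∈ Icc 0 M)
    (hFinv_int : IntervalIntegrable Finv MeasureTheory.volume 0 1)
    (μ0 : ℝ) (hμ0 : μ0 = ∫ s in (0:ℝ)..1, Finv s)
    (fbar : ℝ → ℝ)
    (hfbar : ∀ θ, fbar θ =
      sSup {x | x ∈ Icc (0:ℝ) 1 ∧ (∫ s in (0:ℝ)..x, Finv s) ≤ x * θ})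
    (θbar : ℝ) (hθbar_nonneg : 0 ≤ θbar) (hθbar_lt : θbar < μ0) (hμ0M : μ0 ≤ M) :
    IsGreatest
      {q | q ∈ Icc (0:ℝ) 1 ∧ ∃ μ₂ ∈ Icc μ0 M,
        q * θbar + (1 - q) * μ₂ = μ0 ∧ (∫ s in (0:ℝ)..q, Finv s) ≤ q * θbar}
      (min (fbar θbar) ((M - μ0) / (M - θbar))) := by
  have hθM : θbar < M := lt_of_lt_of_le hθbar_lt hμ0M
  have hMθ : 0 < M - θbar := by linarith
  set G : ℝ → ℝ := fun x => ∫ s in (0:ℝ)..x, Finv s with hGdef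
  -- integrability on subintervals
  have hII : ∀ y x : ℝ, 0 ≤ y → y ≤ x → x ≤ 1 →
      IntervalIntegrable Finv MeasureTheory.volume y x := by
    intro y x hy hyx hx
    apply hFinv_int.mono_set
    rw [uIcc_of_le hyx, uIcc_of_le (by norm_num : (0:ℝ) ≤ 1)]
    exact Icc_subset_Icc hy hx
  -- upper bound by constant M
  have hub : ∀ y x : ℝ, 0 ≤ y → y ≤ x → x ≤ 1 →
      (∫ s in y..x, Finv s) ≤ (x - y) * M := by
    intro y x hy hyx hx
    have := intervalIntegral.integral_mono_on hyx (hII y x hy hyx hx)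
      (intervalIntegrable_const (c := M))
      (fun s hs => (hFinv_range s ⟨le_trans hy hs.1, le_trans hs.2 hx⟩).2)
    simpa using this
  -- ∫₀^y ≤ y * Finv y
  have hint_le : ∀ y : ℝ, 0 ≤ y → y ≤ 1 → G y ≤ y * Finv y := by
    intro y hy hy1
    have := intervalIntegral.integral_mono_on hy (hII 0 y le_rfl hy hy1)
      (intervalIntegrable_const (c := Finv y))
      (fun s hs => hFinv_mono ⟨hs.1, le_trans hs.2 hy1⟩ ⟨hy, hy1⟩ hs.2)
    simpa [hGdef, mul_comm] using this
  -- (x - y) * Finv y ≤ ∫_y^x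
  have hlb : ∀ y x : ℝ, 0 ≤ y → y ≤ x → x ≤ 1 →
      (x - y) * Finv y ≤ ∫ s in y..x, Finv s := by
    intro y x hy hyx hx
    have := intervalIntegral.integral_mono_on hyx
      (intervalIntegrable_const (c := Finv y)) (hII y x hy hyx hx)
      (fun s hs => hFinv_mono ⟨hy, by linarith [hs.2]⟩
        ⟨le_trans hy hs.1, le_trans hs.2 hx⟩ hs.1)
    simpa [mul_comm] using this
  have hsplit : ∀ y x : ℝ, 0 ≤ y → y ≤ x → x ≤ 1 →
      G y + (∫ s in y..x, Finv s) = G x := by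
    intro y x hy hyx hx
    exact intervalIntegral.integral_add_adjacent_intervals
      (hII 0 y le_rfl hy (le_trans hyx hx)) (hII y x hy hyx hx)
  -- downward closedness of A
  have hdown : ∀ x y : ℝ, 0 ≤ y → y ≤ x → x ≤ 1 → G x ≤ x * θbar → G y ≤ y * θbar := by
    intro x y hy hyx hx hGx
    rcases eq_or_lt_of_le (le_trans hy hyx) with hx0 | hx0
    · have hy0 : y = 0 := le_antisymm (by linarith) hy
      simp [hGdef, hy0, intervalIntegral.integral_same]
    · have h1 : G y ≤ y * Finv y := hint_le y hy (le_trans hyx hx)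
      have h2 : (x - y) * Finv y ≤ G x - G y := by
        have := hlb y x hy hyx hx
        have hs := hsplit y x hy hyx hx
        linarith
      -- x * G y ≤ y * G x
      have h3 : x * G y ≤ y * G x := by nlinarith [sub_nonneg.mpr hyx]
      have h4 : x * G y ≤ x * (y * θbar) := by nlinarith
      exact le_of_mul_le_mul_left (by linarith) hx0
  set A : Set ℝ := {x | x ∈ Icc (0:ℝ) 1 ∧ G x ≤ x * θbar} with hAdef
  have hA0 : (0:ℝ) ∈ A := by
    constructor
    · exact ⟨le_rfl, zero_le_one⟩
    · simp [hGdef, intervalIntegral.integral_same]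
  have hAbdd : BddAbove A := ⟨1, fun x hx => hx.1.2⟩
  have hAne : A.Nonempty := ⟨0, hA0⟩
  set a : ℝ := sSup A with hadef
  have ha0 : 0 ≤ a := le_csSup hAbdd hA0
  have ha1 : a ≤ 1 := csSup_le hAne (fun x hx => hx.1.2)
  have hfa : fbar θbar = a := by rw [hfbar]
  rw [hfa]
  -- a ∈ A
  have haA : G a ≤ a * θbar := by
    have key : ∀ ε : ℝ, 0 < ε → G a ≤ a * θbar + ε := by
      intro ε hε
      have hδ : 0 < ε / (M - θbar) := div_pos hε hMθ
      obtain ⟨y, hyA, hy⟩ := exists_lt_of_lt_csSup hAne (by linarith : a - ε / (M - θbar) < a)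
      have hya : y ≤ a := le_csSup hAbdd hyA
      obtain ⟨⟨hy0, hy1⟩, hGy⟩ := hyA
      have hs := hsplit y a hy0 hya ha1
      have hu := hub y a hy0 hya ha1
      have hay : a - y ≤ ε / (M - θbar) := by linarith
      have : (a - y) * M ≤ (a - y) * θbar + ε := by
        have h1 : (a - y) * (M - θbar) ≤ (ε / (M - θbar)) * (M - θbar) := by
          apply mul_le_mul_of_nonneg_right hay (le_of_lt hMθ)
        rw [div_mul_cancel₀ _ (ne_of_gt hMθ)] at h1
        nlinarith
      nlinarith
    exact le_of_forall_pos_le_add key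
  set ρ : ℝ := (M - μ0) / (M - θbar) with hρdef
  have hρ0 : 0 ≤ ρ := div_nonneg (by linarith) (le_of_lt hMθ)
  have hρ1 : ρ < 1 := (div_lt_one hMθ).mpr (by linarith)
  set m : ℝ := min a ρ with hmdef
  have hm0 : 0 ≤ m := le_min ha0 hρ0
  have hm1 : m ≤ 1 := le_trans (min_le_left _ _) ha1
  have hmρ : m ≤ ρ := min_le_right _ _
  have hma : m ≤ a := min_le_left _ _
  have hm_lt1 : m < 1 := lt_of_le_of_lt hmρ hρ1
  have h1m : 0 < 1 - m := by linarith
  constructor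
  · -- membership
    refine ⟨⟨hm0, hm1⟩, (μ0 - m * θbar) / (1 - m), ⟨?_, ?_⟩, ?_, ?_⟩
    · rw [le_div_iff₀ h1m]; nlinarith
    · rw [div_le_iff₀ h1m]
      have : m * (M - θbar) ≤ M - μ0 := by
        have := (le_div_iff₀ hMθ).mp hmρ
        linarith
      nlinarith
    · field_simp
      ring
    · exact hdown a m hm0 hma ha1 haA
  · -- upper bound
    rintro q ⟨⟨hq0, hq1⟩, μ₂, ⟨hμ₂l, hμ₂u⟩, heq, hGq⟩
    apply le_min
    · exact le_csSup hAbdd ⟨⟨hq0, hq1⟩, hGq⟩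
    · rw [le_div_iff₀ hMθ]
      nlinarith [mul_nonneg (by linarith : (0:ℝ) ≤ 1 - q) (by linarith : (0:ℝ) ≤ M - μ₂)]
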